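/- Under the hypotheses of the variational formulation (b finite-valued, lsc in both arguments, convex and differentiable with Lipschitz gradient in the first argument, b(ε,σ) ≥ tr(εσ), growth bound b(ε,σ) ≤ C(‖ε‖² + ‖σ‖²) for σ ∈ K), if (u,σ) ∈ U × Y₀ satisfies the variational inequality B(D(u),σ) ≤ B(ε,σ) − ⟨ε,σ⟩₁ for all ε ∈ L²(Ω,Sym(n)), then σ(x) ∈ ∂b(·,σ(x))(D(u)(x)) for almost every x ∈ Ω. -/

import Mathlib

open MeasureTheory
noncomputable section

attribute [local instance] Matrix.frobeniusNormedAddCommGroup Matrix.frobeniusNormedSpace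

instance matrixMeasurableSpace (n : ℕ) : MeasurableSpace (Matrix (Fin n) (Fin n) ℝ) :=
  MeasurableSpace.pi

/-- The symmetrized gradient `D(u) = (∇u + ∇uᵀ)/2` of a displacement field. -/
def symGrad {n : ℕ} (u : (Fin n → ℝ) → (Fin n → ℝ)) (x : Fin n → ℝ) :
    Matrix (Fin n) (Fin n) ℝ :=
  Matrix.of fun i j =>
    (fderiv ℝ u x (Pi.single i 1) j + fderiv ℝ u x (Pi.single j 1) i) / 2
instance matrixBorelSpace (n : ℕ) : BorelSpace (Matrix (Fin n) (Fin n) ℝ) := Pi.borelSpace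

lemma abs_trace_mul_le {n : ℕ} (A B : Matrix (Fin n) (Fin n) ℝ) :
    |(A * B).trace| ≤ ‖A‖ * ‖B‖ := by
  have hA : ‖A‖ = Real.sqrt (∑ i, ∑ j, (A i j)^2) := by
    rw [Matrix.frobenius_norm_def, Real.sqrt_eq_rpow]
    congr 1
    refine Finset.sum_congr rfl fun i _ => Finset.sum_congr rfl fun j _ => ?_
    rw [Real.norm_eq_abs, show ((2:ℝ)) = ((2:ℕ):ℝ) by norm_num, Real.rpow_natCast, sq_abs]
  have hB : ‖B‖ = Real.sqrt (∑ i, ∑ j, (B i j)^2) := by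
    rw [Matrix.frobenius_norm_def, Real.sqrt_eq_rpow]
    congr 1
    refine Finset.sum_congr rfl fun i _ => Finset.sum_congr rfl fun j _ => ?_
    rw [Real.norm_eq_abs, show ((2:ℝ)) = ((2:ℕ):ℝ) by norm_num, Real.rpow_natCast, sq_abs]
  calc |(A * B).trace| = |∑ p : Fin n × Fin n, A p.1 p.2 * B p.2 p.1| := by
        rw [Matrix.trace]
        simp [Matrix.diag, Matrix.mul_apply, Fintype.sum_prod_type]
    _ ≤ ∑ p : Fin n × Fin n, |A p.1 p.2| * |B p.2 p.1| := by
        refine (Finset.abs_sum_le_sum_abs _ _).trans (le_of_eq ?_)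
        simp [abs_mul]
    _ ≤ Real.sqrt (∑ p : Fin n × Fin n, |A p.1 p.2|^2) *
        Real.sqrt (∑ p : Fin n × Fin n, |B p.2 p.1|^2) :=
        Real.sum_mul_le_sqrt_mul_sqrt _ _ _
    _ = ‖A‖ * ‖B‖ := by
        rw [hA, hB]
        congr 1
        · congr 1; simp [sq_abs, Fintype.sum_prod_type]
        · congr 1
          rw [Fintype.sum_prod_type, Finset.sum_comm]
          simp [sq_abs]

instance matrixPseudoMetrizable (n : ℕ) :
    TopologicalSpace.PseudoMetrizableSpace (Matrix (Fin n) (Fin n) ℝ) :=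
  inferInstanceAs (TopologicalSpace.PseudoMetrizableSpace (Fin n → Fin n → ℝ))

instance matrixSecondCountable (n : ℕ) :
    SecondCountableTopology (Matrix (Fin n) (Fin n) ℝ) :=
  inferInstanceAs (SecondCountableTopology (Fin n → Fin n → ℝ))

instance matrixContinuousAdd (n : ℕ) :
    ContinuousAdd (Matrix (Fin n) (Fin n) ℝ) :=
  inferInstanceAs (ContinuousAdd (Fin n → Fin n → ℝ))

theorem variational_inequality_implies_pointwise_law {n : ℕ}
    (Ω : Set (Fin n → ℝ)) (hΩo : IsOpen Ω) (hΩb : Bornology.IsBounded Ω)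
    (K : Set (Matrix (Fin n) (Fin n) ℝ)) (hKcl : IsClosed K) (hKconv : Convex ℝ K)
    (hK0 : (0 : Matrix (Fin n) (Fin n) ℝ) ∈ K)
    (b : Matrix (Fin n) (Fin n) ℝ → Matrix (Fin n) (Fin n) ℝ → ℝ)
    (hbmeas : Measurable (Function.uncurry b))
    -- b lower semicontinuous in each argument
    (hlsc₁ : ∀ σm, LowerSemicontinuous fun εm => b εm σm)
    (hlsc₂ : ∀ εm, LowerSemicontinuous fun σm => b εm σm)
    -- b convex and differentiable with Lipschitz gradient in the first argument
    (hbconv : ∀ σm, ConvexOn ℝ Set.univ fun εm => b εm σm)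
    (hbdiff : ∀ σm, Differentiable ℝ fun εm => b εm σm)
    (L : NNReal) (hblip : ∀ σm, LipschitzWith L fun εm =>
      (fderiv ℝ (fun e => b e σm) εm : @ContinuousLinearMap ℝ ℝ _ _ (RingHom.id ℝ)
        (Matrix (Fin n) (Fin n) ℝ) (PseudoMetricSpace.toUniformSpace).toTopologicalSpace _ ℝ _ _ _ _))
    (hbge : ∀ εm σm, (εm * σm).trace ≤ b εm σm)
    (C : ℝ) (hgrowth : ∀ εm σm, σm ∈ K → b εm σm ≤ C * (‖εm‖ ^ 2 + ‖σm‖ ^ 2))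
    (U : Set ((Fin n → ℝ) → Fin n → ℝ)) (u : (Fin n → ℝ) → Fin n → ℝ) (hu : u ∈ U)
    (hDu : MemLp (symGrad u) 2 (volume.restrict Ω))
    (σ : (Fin n → ℝ) → Matrix (Fin n) (Fin n) ℝ)
    (hσ : MemLp σ 2 (volume.restrict Ω))
    (hσK : ∀ᵐ x ∂volume.restrict Ω, σ x ∈ K)
    (hσY₀ : ∀ v ∈ U, ∫ x in Ω, (symGrad v x * σ x).trace = 0)
    -- the variational inequality B(D(u),σ) ≤ B(ε,σ) − ⟨ε,σ⟩₁ for all ε ∈ L²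
    (hvar : ∀ ε : (Fin n → ℝ) → Matrix (Fin n) (Fin n) ℝ,
      MemLp ε 2 (volume.restrict Ω) →
      ∫ x in Ω, b (symGrad u x) (σ x) ≤
        (∫ x in Ω, b (ε x) (σ x)) - ∫ x in Ω, (ε x * σ x).trace) :
    ∀ᵐ x ∂volume.restrict Ω, ∀ z,
      b (symGrad u x) (σ x) + ((z - symGrad u x) * σ x).trace ≤ b z (σ x) := by
  classical
  set μ := volume.restrict Ω with hμdef
  set Du := symGrad u with hDudef
  haveI hμfin : IsFiniteMeasure μ := ⟨by
    rw [Measure.restrict_apply_univ]; exact hΩb.measure_lt_top⟩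
  have hσm : AEMeasurable σ μ := hσ.1.aemeasurable
  -- squared norms are integrable
  have hsq : ∀ (f : (Fin n → ℝ) → Matrix (Fin n) (Fin n) ℝ), MemLp f 2 μ →
      Integrable (fun x => ‖f x‖ ^ 2) μ := by
    intro f hf
    have h := hf.integrable_norm_rpow two_ne_zero ENNReal.ofNat_ne_top
    exact h.congr (Filter.Eventually.of_forall fun x => by norm_num)
  have hσ2 : Integrable (fun x => ‖σ x‖ ^ 2) μ := hsq σ hσ
  -- trace products are integrable
  have htr : ∀ (f g : (Fin n → ℝ) → Matrix (Fin n) (Fin n) ℝ),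
      MemLp f 2 μ → MemLp g 2 μ →
      Integrable (fun x => ((f x) * (g x)).trace) μ := by
    intro f g hf hg
    have hmeas : AEStronglyMeasurable (fun x => ((f x) * (g x)).trace) μ := by
      have hm : Measurable (fun p : Matrix (Fin n) (Fin n) ℝ × Matrix (Fin n) (Fin n) ℝ =>
          (p.1 * p.2).trace) :=
        ((continuous_fst.matrix_mul continuous_snd).matrix_trace).measurable
      exact (hm.comp_aemeasurable (hf.1.aemeasurable.prodMk hg.1.aemeasurable)).aestronglyMeasurable
    refine Integrable.mono' (((hsq f hf).add (hsq g hg)).const_mul (1/2)) hmeas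
      (Filter.Eventually.of_forall fun x => ?_)
    have h1 := abs_trace_mul_le (f x) (g x)
    have h2 : ‖f x‖ * ‖g x‖ ≤ (‖f x‖ ^ 2 + ‖g x‖ ^ 2) / 2 := by
      nlinarith [sq_nonneg (‖f x‖ - ‖g x‖)]
    rw [Real.norm_eq_abs]
    simp only [Pi.add_apply]
    linarith
  -- compositions with b are integrable
  have hbInt : ∀ (f : (Fin n → ℝ) → Matrix (Fin n) (Fin n) ℝ), MemLp f 2 μ →
      Integrable (fun x => b (f x) (σ x)) μ := by
    intro f hf
    have hmeas : AEStronglyMeasurable (fun x => b (f x) (σ x)) μ :=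
      (hbmeas.comp_aemeasurable (hf.1.aemeasurable.prodMk hσm)).aestronglyMeasurable
    refine Integrable.mono' (((hsq f hf).add hσ2).const_mul (|C| + 1)) hmeas ?_
    filter_upwards [hσK] with x hxK
    have hup := hgrowth (f x) (σ x) hxK
    have hlo := hbge (f x) (σ x)
    have h1 := abs_trace_mul_le (f x) (σ x)
    have h2 : ‖f x‖ * ‖σ x‖ ≤ ‖f x‖ ^ 2 + ‖σ x‖ ^ 2 := by
      nlinarith [sq_nonneg (‖f x‖ - ‖σ x‖)]
    have hC : C ≤ |C| := le_abs_self C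
    have hnn : (0:ℝ) ≤ ‖f x‖ ^ 2 + ‖σ x‖ ^ 2 := by positivity
    rw [Real.norm_eq_abs, abs_le]
    simp only [Pi.add_apply]
    constructor
    · nlinarith [neg_abs_le ((f x * σ x).trace), mul_nonneg (abs_nonneg C) hnn]
    · nlinarith
  have hbzInt : ∀ z : Matrix (Fin n) (Fin n) ℝ,
      Integrable (fun x => b z (σ x)) μ := fun z => hbInt (fun _ => z) (memLp_const z)
  have hbDuInt : Integrable (fun x => b (Du x) (σ x)) μ := hbInt Du hDu
  have htr0 : ∫ x, (Du x * σ x).trace ∂μ = 0 := hσY₀ u hu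
  -- the family of a.e. inequalities, one for each z
  have hF : ∀ z : Matrix (Fin n) (Fin n) ℝ, ∀ᵐ x ∂μ,
      0 ≤ b z (σ x) - b (Du x) (σ x) - ((z - Du x) * σ x).trace := by
    intro z
    have hzDu : MemLp (fun x => z - Du x) 2 μ := (memLp_const z).sub hDu
    have htrz : Integrable (fun x => ((z - Du x) * σ x).trace) μ := htr _ σ hzDu hσ
    have hFint : Integrable
        (fun x => b z (σ x) - b (Du x) (σ x) - ((z - Du x) * σ x).trace) μ :=
      ((hbzInt z).sub hbDuInt).sub htrz
    refine ae_nonneg_of_forall_setIntegral_nonneg hFint ?_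
    intro s hs _
    set ε : (Fin n → ℝ) → Matrix (Fin n) (Fin n) ℝ :=
      fun x => Du x + s.indicator (fun x => z - Du x) x with hεdef
    have hεLp : MemLp ε 2 μ := by
      have hind : MemLp (s.indicator (fun x => z - Du x)) 2 μ :=
        hzDu.of_le (hzDu.1.indicator hs)
          (Filter.Eventually.of_forall fun x => norm_indicator_le_norm_self _ x)
      have h := hDu.sub hind.neg
      rwa [sub_neg_eq_add] at h
    have hvar' := hvar ε hεLp
    have hbε : ∀ x, b (ε x) (σ x) =
        b (Du x) (σ x) + s.indicator (fun x => b z (σ x) - b (Du x) (σ x)) x := by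
      intro x
      by_cases hx : x ∈ s
      · simp only [hεdef, Set.indicator_of_mem hx, add_sub_cancel]
      · simp [hεdef, Set.indicator_of_notMem hx]
    have htrε : ∀ x, (ε x * σ x).trace =
        (Du x * σ x).trace + s.indicator (fun x => ((z - Du x) * σ x).trace) x := by
      intro x
      by_cases hx : x ∈ s
      · simp only [hεdef, Set.indicator_of_mem hx]
        rw [Matrix.add_mul, Matrix.trace_add]
      · simp [hεdef, Set.indicator_of_notMem hx]
    have hdiffInt : Integrable
        (fun x => s.indicator (fun x => b z (σ x) - b (Du x) (σ x)) x) μ :=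
      ((hbzInt z).sub hbDuInt).indicator hs
    have hindtrInt : Integrable
        (fun x => s.indicator (fun x => ((z - Du x) * σ x).trace) x) μ :=
      htrz.indicator hs
    have hI1 : ∫ x, b (ε x) (σ x) ∂μ =
        (∫ x, b (Du x) (σ x) ∂μ) + ∫ x in s, (b z (σ x) - b (Du x) (σ x)) ∂μ := by
      rw [integral_congr_ae (Filter.Eventually.of_forall hbε),
        integral_add hbDuInt hdiffInt,
        integral_indicator hs]
    have hI2 : ∫ x, (ε x * σ x).trace ∂μ =
        ∫ x in s, ((z - Du x) * σ x).trace ∂μ := by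
      rw [integral_congr_ae (Filter.Eventually.of_forall htrε),
        integral_add (htr Du σ hDu hσ) hindtrInt,
        integral_indicator hs, htr0, zero_add]
    have hsplit : ∫ x in s, (b z (σ x) - b (Du x) (σ x) - ((z - Du x) * σ x).trace) ∂μ =
        (∫ x in s, (b z (σ x) - b (Du x) (σ x)) ∂μ) -
          ∫ x in s, ((z - Du x) * σ x).trace ∂μ :=
      integral_sub ((hbzInt z).sub hbDuInt).integrableOn htrz.integrableOn
    rw [hsplit]
    rw [hI1, hI2] at hvar'
    linarith
  obtain ⟨D, hDc, hDd⟩ :=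
    TopologicalSpace.exists_countable_dense (Matrix (Fin n) (Fin n) ℝ)
  have hall : ∀ᵐ x ∂μ, ∀ z ∈ D,
      0 ≤ b z (σ x) - b (Du x) (σ x) - ((z - Du x) * σ x).trace :=
    (ae_ball_iff hDc).2 fun z _ => hF z
  filter_upwards [hall] with x hx z
  have hSc : IsClosed {w : Matrix (Fin n) (Fin n) ℝ |
      b (Du x) (σ x) + ((w - Du x) * σ x).trace ≤ b w (σ x)} := by
    refine isClosed_le ?_ ?_
    · exact continuous_const.add
        (((continuous_id.sub continuous_const).matrix_mul continuous_const).matrix_trace)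
    · exact (hbdiff (σ x)).continuous
  have hsub : D ⊆ {w : Matrix (Fin n) (Fin n) ℝ |
      b (Du x) (σ x) + ((w - Du x) * σ x).trace ≤ b w (σ x)} := by
    intro w hw
    have := hx w hw
    simp only [Set.mem_setOf_eq]
    linarith
  have hcl := hSc.closure_subset_iff.mpr hsub
  exact hcl (by rw [hDd.closure_eq]; trivial)
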